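/- Let γ > 0 and c, d be fixed. Let (X_k)_{k=0,…,K} with X_k ∈ ℝ^{N_k×d} and (Y_k)_{k=0,…,K} with Y_k ∈ ℝ^{N_k×c} be sequences of data and label matrices. Define R_0 = (X₀ᵀX₀ + γI)⁻¹, W_0 = R_0X₀ᵀY₀, and for k ≥ 1: R_k = R_{k−1} − R_{k−1}X_kᵀ(I + X_kR_{k−1}X_kᵀ)⁻¹X_kR_{k−1} and W_k = W_{k−1} + R_kX_kᵀ(Y_k − X_kW_{k−1}). Then for every k = 0, …, K, W_k = (Σ_{i=0}^{k} X_iᵀX_i + γI)⁻¹(Σ_{i=0}^{k} X_iᵀY_i); that is, the recursively trained weight equals the joint ridge least-squares solution on all data from phase 0 to phase k. -/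
import Mathlib


open Matrix

lemma real_weight_aux_posdef {d : ℕ} (γ : ℝ) (hγ : 0 < γ)
    {s : Finset ι} (M : ι → Matrix (Fin d) (Fin d) ℝ)
    (hM : ∀ i ∈ s, (M i).PosSemidef) :
    ((∑ i ∈ s, M i) + γ • (1 : Matrix (Fin d) (Fin d) ℝ)).PosDef := by
  have h1 : (γ • (1 : Matrix (Fin d) (Fin d) ℝ)).PosDef := by
    rw [Matrix.smul_one_eq_diagonal]
    exact Matrix.posDef_diagonal_iff.mpr fun _ => hγ
  have hs : (∑ i ∈ s, M i).PosSemidef := Finset.sum_induction _ _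
    (fun a b ha hb => ha.add hb) Matrix.PosSemidef.zero hM
  simpa [add_comm] using h1.add_posSemidef hs

lemma real_fin_Iic_succ {K : ℕ} (k : Fin K) :
    Finset.Iic k.succ = insert k.succ (Finset.Iic k.castSucc) := by
  ext i
  simp only [Finset.mem_Iic, Finset.mem_insert]
  constructor
  · intro h
    rcases eq_or_lt_of_le h with h | h
    · exact Or.inl h
    · exact Or.inr (Fin.le_castSucc_iff.mpr h)
  · rintro (rfl | h)
    · exact le_rfl
    · exact le_of_lt (Fin.le_castSucc_iff.mp h)

/-- Weight-invariant property (Theorem 1 of REAL): the recursively trained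
weight `W_k = W_{k−1} + R_kX_kᵀ(Y_k − X_kW_{k−1})`, with memory-matrix
recursion `R_k = R_{k−1} − R_{k−1}X_kᵀ(I + X_kR_{k−1}X_kᵀ)⁻¹X_kR_{k−1}`,
`R₀ = (X₀ᵀX₀ + γI)⁻¹` and `W₀ = R₀X₀ᵀY₀`, equals the joint ridge
least-squares solution `(∑_{i=0}^{k} X_iᵀX_i + γI)⁻¹(∑_{i=0}^{k} X_iᵀY_i)`
at every phase `k = 0, …, K`. -/
theorem weight_invariant_property (K d c : ℕ)
    (N : Fin (K + 1) → ℕ) (γ : ℝ) (hγ : 0 < γ)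
    (X : ∀ k : Fin (K + 1), Matrix (Fin (N k)) (Fin d) ℝ)
    (Y : ∀ k : Fin (K + 1), Matrix (Fin (N k)) (Fin c) ℝ)
    (R : Fin (K + 1) → Matrix (Fin d) (Fin d) ℝ)
    (W : Fin (K + 1) → Matrix (Fin d) (Fin c) ℝ)
    (hR0 : R 0 = ((X 0)ᵀ * X 0 + γ • (1 : Matrix (Fin d) (Fin d) ℝ))⁻¹)
    (hW0 : W 0 = R 0 * (X 0)ᵀ * Y 0)
    (hRk : ∀ k : Fin K,
      R k.succ = R k.castSucc - R k.castSucc * (X k.succ)ᵀ *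
        ((1 : Matrix (Fin (N k.succ)) (Fin (N k.succ)) ℝ) +
          X k.succ * R k.castSucc * (X k.succ)ᵀ)⁻¹ * X k.succ * R k.castSucc)
    (hWk : ∀ k : Fin K,
      W k.succ = W k.castSucc + R k.succ * (X k.succ)ᵀ *
        (Y k.succ - X k.succ * W k.castSucc)) :
    ∀ k : Fin (K + 1),
      W k = ((∑ i ∈ Finset.Iic k, (X i)ᵀ * X i)
          + γ • (1 : Matrix (Fin d) (Fin d) ℝ))⁻¹ *
        (∑ i ∈ Finset.Iic k, (X i)ᵀ * Y i) := by
  -- A k : accumulated regularized Gram matrix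
  set A : Fin (K + 1) → Matrix (Fin d) (Fin d) ℝ :=
    fun k => (∑ i ∈ Finset.Iic k, (X i)ᵀ * X i) + γ • 1 with hA
  have hXps : ∀ k : Fin (K + 1), ((X k)ᵀ * X k).PosSemidef := by
    intro k
    have := Matrix.posSemidef_conjTranspose_mul_self (X k)
    simpa [Matrix.conjTranspose_eq_transpose_of_trivial] using this
  have hApos : ∀ k, (A k).PosDef := fun k =>
    real_weight_aux_posdef γ hγ _ (fun i _ => hXps i)
  -- joint claim by induction
  have key : ∀ k : Fin (K + 1),
      R k = (A k)⁻¹ ∧ W k = (A k)⁻¹ * (∑ i ∈ Finset.Iic k, (X i)ᵀ * Y i) := by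
    intro k
    induction k using Fin.induction with
    | zero =>
      have hI0 : Finset.Iic (0 : Fin (K + 1)) = {0} := by
        ext i; simp [Fin.le_zero_iff]
      have hA0 : A 0 = (X 0)ᵀ * X 0 + γ • 1 := by
        simp [hA, hI0]
      constructor
      · rw [hR0, hA0]
      · rw [hW0, hR0, hA0]
        simp [hI0, Matrix.mul_assoc]
    | succ k ih =>
      obtain ⟨ihR, ihW⟩ := ih
      have hnot : k.succ ∉ Finset.Iic k.castSucc := by
        simp [Fin.lt_iff_val_lt_val, Fin.castSucc, Fin.succ]
      have hAsucc : A k.succ = A k.castSucc + (X k.succ)ᵀ * X k.succ := by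
        rw [hA]
        simp only []
        rw [real_fin_Iic_succ, Finset.sum_insert hnot]
        abel
      have hBsucc : (∑ i ∈ Finset.Iic k.succ, (X i)ᵀ * Y i)
          = (∑ i ∈ Finset.Iic k.castSucc, (X i)ᵀ * Y i) + (X k.succ)ᵀ * Y k.succ := by
        rw [real_fin_Iic_succ, Finset.sum_insert hnot]
        abel
      have hAc := hApos k.castSucc
      have hAs := hApos k.succ
      -- the middle matrix is posdef hence invertible
      have hmid : ((1 : Matrix (Fin (N k.succ)) (Fin (N k.succ)) ℝ)
          + X k.succ * (A k.castSucc)⁻¹ * (X k.succ)ᵀ).PosDef := by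
        have h1 : (X k.succ * (A k.castSucc)⁻¹ * (X k.succ)ᵀ).PosSemidef := by
          have := hAc.inv.posSemidef.mul_mul_conjTranspose_same (X k.succ)
          simpa [Matrix.conjTranspose_eq_transpose_of_trivial, Matrix.mul_assoc] using this
        have h2 : (1 : Matrix (Fin (N k.succ)) (Fin (N k.succ)) ℝ).PosDef := Matrix.PosDef.one
        exact h2.add_posSemidef h1
      -- R step by Woodbury
      have hRstep : R k.succ = (A k.succ)⁻¹ := by
        rw [hRk k, ihR, hAsucc]
        have hwood := Matrix.add_mul_mul_inv_eq_sub (A k.castSucc) ((X k.succ)ᵀ)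
          (1 : Matrix (Fin (N k.succ)) (Fin (N k.succ)) ℝ) (X k.succ)
          hAc.isUnit isUnit_one (by simpa using hmid.isUnit)
        have hone : ((1 : Matrix (Fin (N k.succ)) (Fin (N k.succ)) ℝ))⁻¹ = 1 :=
          Matrix.inv_eq_left_inv (by simp)
        simp only [Matrix.mul_one, hone] at hwood
        rw [hwood]
      refine ⟨hRstep, ?_⟩
      -- W step
      rw [hWk k, ihW, hRstep, hBsucc]
      haveI := hAs.isUnit.invertible
      haveI := hAc.isUnit.invertible
      apply Matrix.mul_right_injective_of_invertible (A k.succ)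
      have e1 : A k.succ * (A k.succ)⁻¹ = 1 := Matrix.mul_inv_of_invertible _
      have e2 : A k.castSucc * (A k.castSucc)⁻¹ = 1 := Matrix.mul_inv_of_invertible _
      simp only [Matrix.mul_add, Matrix.mul_sub, Matrix.add_mul, Matrix.sub_mul,
        ← Matrix.mul_assoc]
      simp only [e1, Matrix.one_mul]
      rw [hAsucc]
      simp only [Matrix.add_mul, ← Matrix.mul_assoc, e2, Matrix.one_mul]
      abel
  intro k
  exact (key k).2
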